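/- Given a network G with duplication forest Γ and DMC model M with parameters p_c ∈ (0,1), p ∈ (0,1), for any two duplicate sequences θ₁, θ₂ compatible with Γ, the likelihood ratio satisfies L(θ₁ | G, Γ, M) / L(θ₂ | G, Γ, M) = ((1−p)/2)^{ℓ(θ₁) − ℓ(θ₂)}. In particular, a compatible sequence maximizes the likelihood if and only if it minimizes the loss number ℓ(θ), and the maximizer does not depend on the parameters p_c and p. -/

import Mathlib

open scoped Classical

universe u

variable {V : Type u}

/-- The merge (backward) operator `R_v^u(G)`: contract duplicate `v` into anchor `u`.
Vertex `v` becomes isolated (representing its removal from the vertex set). -/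
def mergeG (G : SimpleGraph V) (u v : V) : SimpleGraph V where
  Adj x y := x ≠ y ∧ x ≠ v ∧ y ≠ v ∧
    (G.Adj x y ∨ (x = u ∧ G.Adj v y) ∨ (y = u ∧ G.Adj v x))
  symm := ⟨by
    rintro x y ⟨h1, h2, h3, h4⟩
    refine ⟨h1.symm, h3, h2, ?_⟩
    rcases h4 with h | ⟨a, b⟩ | ⟨a, b⟩
    · exact Or.inl h.symm
    · exact Or.inr (Or.inr ⟨a, b⟩)
    · exact Or.inr (Or.inl ⟨a, b⟩)⟩
  loopless := ⟨by rintro x ⟨h, _⟩; exact h rfl⟩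

/-- δ(v): 1 if the duplicate `v` is adjacent to its anchor `u`. -/
noncomputable def deltaI (G : SimpleGraph V) (u v : V) : ℕ :=
  if G.Adj u v then 1 else 0

/-- e(v): number of common neighbours of anchor `u` and duplicate `v`. -/
noncomputable def extI [Fintype V] (G : SimpleGraph V) (u v : V) : ℕ :=
  (G.neighborFinset u ∩ G.neighborFinset v).card

/-- ℓ(v): number of vertices (other than `u`, `v`) adjacent to exactly one of `u`, `v`. -/
noncomputable def lossI [Fintype V] (G : SimpleGraph V) (u v : V) : ℕ :=
  (((G.neighborFinset u ∪ G.neighborFinset v) \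
      (G.neighborFinset u ∩ G.neighborFinset v)) \ {u, v}).card

/-- Apply the merge operators backward along a list of (anchor, duplicate) pairs. -/
noncomputable def graphAfter (G : SimpleGraph V) (steps : List (V × V)) : SimpleGraph V :=
  steps.foldl (fun g p => mergeG g p.1 p.2) G

noncomputable def deltaNum : SimpleGraph V → List (V × V) → ℕ
  | _, [] => 0
  | G, s :: rest => deltaI G s.1 s.2 + deltaNum (mergeG G s.1 s.2) rest

noncomputable def extNum [Fintype V] : SimpleGraph V → List (V × V) → ℕ
  | _, [] => 0
  | G, s :: rest => extI G s.1 s.2 + extNum (mergeG G s.1 s.2) rest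

noncomputable def lossNum [Fintype V] : SimpleGraph V → List (V × V) → ℕ
  | _, [] => 0
  | G, s :: rest => lossI G s.1 s.2 + lossNum (mergeG G s.1 s.2) rest

/-- The likelihood of a (backward) history: product of one-step DMC transition
probabilities `p_c^{δ_i} p^{e_i} q^{ℓ_i}` with `q = (1-p)/2`. -/
noncomputable def likelihood [Fintype V] (pc p : ℝ) : SimpleGraph V → List (V × V) → ℝ
  | _, [] => 1
  | G, s :: rest =>
      pc ^ deltaI G s.1 s.2 * p ^ extI G s.1 s.2 * ((1 - p) / 2) ^ lossI G s.1 s.2 *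
        likelihood pc p (mergeG G s.1 s.2) rest

/-- Rooted binary trees. -/
inductive BTree (V : Type u) : Type u
  | leaf : V → BTree V
  | node : BTree V → BTree V → BTree V

def BTree.leaves : BTree V → List V
  | .leaf v => [v]
  | .node l r => l.leaves ++ r.leaves

/-- A duplication forest: a list of rooted binary trees. -/
abbrev Forest (V : Type u) := List (BTree V)

def Forest.leaves (Γ : Forest V) : List V := Γ.flatMap BTree.leaves

/-- Replace the cherry `{u, v}` of a tree by the single leaf `u`. -/
inductive ReplaceCherry : BTree V → V → V → BTree V → Prop
  | base_left (u v : V) : ReplaceCherry (.node (.leaf u) (.leaf v)) u v (.leaf u)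
  | base_right (u v : V) : ReplaceCherry (.node (.leaf v) (.leaf u)) u v (.leaf u)
  | left {l l' r : BTree V} {u v : V} :
      ReplaceCherry l u v l' → ReplaceCherry (.node l r) u v (.node l' r)
  | right {l r r' : BTree V} {u v : V} :
      ReplaceCherry r u v r' → ReplaceCherry (.node l r) u v (.node l r')

/-- One backward step on a duplication forest: replace the cherry `{u,v}` in one tree. -/
inductive ForestStep : Forest V → V → V → Forest V → Prop
  | head {t t' : BTree V} {ts : Forest V} {u v : V} :
      ReplaceCherry t u v t' → ForestStep (t :: ts) u v (t' :: ts)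
  | tail {t : BTree V} {ts ts' : Forest V} {u v : V} :
      ForestStep ts u v ts' → ForestStep (t :: ts) u v (t :: ts')

/-- `FUnfold Γ steps Γ₀`: the (anchor, duplicate) list `steps`, processed backward in time,
is compatible with the duplication forest `Γ` and reduces it to `Γ₀`. -/
inductive FUnfold : Forest V → List (V × V) → Forest V → Prop
  | nil (Γ : Forest V) : FUnfold Γ [] Γ
  | cons {Γ Γ' Γ₀ : Forest V} {u v : V} {steps : List (V × V)} :
      ForestStep Γ u v Γ' → FUnfold Γ' steps Γ₀ → FUnfold Γ ((u, v) :: steps) Γ₀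

/-- A forest consisting only of isolated leaves (duplication forest of a seed graph). -/
def IsSeed (Γ : Forest V) : Prop := ∀ t ∈ Γ, ∃ v, t = BTree.leaf v


section AuxEsum

variable {V : Type u}

lemma mergeG_adj (G : SimpleGraph V) (u v x y : V) :
    (mergeG G u v).Adj x y ↔ x ≠ y ∧ x ≠ v ∧ y ≠ v ∧
      (G.Adj x y ∨ (x = u ∧ G.Adj v y) ∨ (y = u ∧ G.Adj v x)) := Iff.rfl

noncomputable def esum [Fintype V] (G : SimpleGraph V) : ℕ :=
  ∑ x : V, ∑ y : V, if G.Adj x y then 1 else 0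

set_option maxHeartbeats 2000000 in
lemma ptwise (G : SimpleGraph V) {u v : V} (huv : u ≠ v) (x y : V) :
    ((if G.Adj x y then 1 else 0) +
      ((if x = u ∧ (y ≠ v ∧ y ≠ u ∧ G.Adj v y ∧ ¬ G.Adj u y) then 1 else 0) +
       (if y = u ∧ (x ≠ v ∧ x ≠ u ∧ G.Adj v x ∧ ¬ G.Adj u x) then 1 else 0)) : ℕ)
    = (if (mergeG G u v).Adj x y then 1 else 0) +
      ((if x = v ∧ G.Adj v y then 1 else 0) +
       (if y = v ∧ x ≠ v ∧ G.Adj x v then 1 else 0)) := by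
  have n1 : G.Adj x y → x ≠ y := G.ne_of_adj
  have n4 : G.Adj x v → x ≠ v := G.ne_of_adj
  have n5 : G.Adj u y → u ≠ y := G.ne_of_adj
  have s1 : G.Adj x v ↔ G.Adj v x := G.adj_comm x v
  have s3 : G.Adj x u ↔ G.Adj u x := G.adj_comm x u
  have s4 : G.Adj y v ↔ G.Adj v y := G.adj_comm y v
  have s5 : G.Adj y u ↔ G.Adj u y := G.adj_comm y u
  have s6 : G.Adj v u ↔ G.Adj u v := G.adj_comm v u
  simp only [mergeG_adj]
  by_cases h0 : x = y <;> by_cases h1 : x = v <;> by_cases h2 : y = v <;> by_cases h3 : x = u <;>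
    by_cases h4 : y = u <;> by_cases h5 : G.Adj x y <;> by_cases h6 : G.Adj v y <;>
    by_cases h7 : G.Adj u y <;> by_cases h8 : G.Adj v x <;> by_cases h9 : G.Adj u x <;>
    simp_all <;> omega

lemma extI_eq_sum [Fintype V] (G : SimpleGraph V) (u v : V) :
    extI G u v = ∑ y : V, if G.Adj u y ∧ G.Adj v y then 1 else 0 := by
  rw [extI]
  have h : G.neighborFinset u ∩ G.neighborFinset v
      = Finset.univ.filter (fun y => G.Adj u y ∧ G.Adj v y) := by
    ext y; simp [SimpleGraph.mem_neighborFinset]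
  rw [h, Finset.card_filter]

lemma esum_merge [Fintype V] (G : SimpleGraph V) {u v : V} (huv : u ≠ v) :
    esum (mergeG G u v) + 2 * extI G u v + 2 * deltaI G u v = esum G := by
  have H : (∑ x : V, ∑ y : V, ((if G.Adj x y then 1 else 0) +
      ((if x = u ∧ (y ≠ v ∧ y ≠ u ∧ G.Adj v y ∧ ¬ G.Adj u y) then 1 else 0) +
       (if y = u ∧ (x ≠ v ∧ x ≠ u ∧ G.Adj v x ∧ ¬ G.Adj u x) then 1 else 0))))
      = ∑ x : V, ∑ y : V, ((if (mergeG G u v).Adj x y then 1 else 0) +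
      ((if x = v ∧ G.Adj v y then 1 else 0) +
       (if y = v ∧ x ≠ v ∧ G.Adj x v then 1 else 0))) := by
    refine Finset.sum_congr rfl fun x _ => Finset.sum_congr rfl fun y _ => ?_
    exact ptwise G huv x y
  simp only [Finset.sum_add_distrib] at H
  have hb1 : (∑ x : V, ∑ y : V,
      if x = u ∧ (y ≠ v ∧ y ≠ u ∧ G.Adj v y ∧ ¬ G.Adj u y) then 1 else 0)
      = ∑ y : V, if y ≠ v ∧ y ≠ u ∧ G.Adj v y ∧ ¬ G.Adj u y then 1 else 0 := by
    rw [Finset.sum_comm]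
    refine Finset.sum_congr rfl fun y _ => ?_
    by_cases h : y ≠ v ∧ y ≠ u ∧ G.Adj v y ∧ ¬ G.Adj u y <;> simp [h]
  have hb2 : (∑ x : V, ∑ y : V,
      if y = u ∧ (x ≠ v ∧ x ≠ u ∧ G.Adj v x ∧ ¬ G.Adj u x) then 1 else 0)
      = ∑ x : V, if x ≠ v ∧ x ≠ u ∧ G.Adj v x ∧ ¬ G.Adj u x then 1 else 0 := by
    refine Finset.sum_congr rfl fun x _ => ?_
    by_cases h : x ≠ v ∧ x ≠ u ∧ G.Adj v x ∧ ¬ G.Adj u x <;> simp [h]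
  have ha1 : (∑ x : V, ∑ y : V, if x = v ∧ G.Adj v y then 1 else 0)
      = ∑ y : V, if G.Adj v y then 1 else 0 := by
    rw [Finset.sum_comm]
    refine Finset.sum_congr rfl fun y _ => ?_
    by_cases h : G.Adj v y <;> simp [h]
  have ha2 : (∑ x : V, ∑ y : V, if y = v ∧ x ≠ v ∧ G.Adj x v then 1 else 0)
      = ∑ x : V, if G.Adj v x then 1 else 0 := by
    refine Finset.sum_congr rfl fun x _ => ?_
    by_cases h : G.Adj x v
    · have hxv : x ≠ v := G.ne_of_adj h
      have h' : G.Adj v x := h.symm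
      simp [h, hxv, h']
    · have h' : ¬ G.Adj v x := fun hh => h (hh.symm)
      simp [h, h']
  have hdv : (∑ y : V, if G.Adj v y then 1 else 0)
      = extI G u v + deltaI G u v
        + (∑ y : V, if y ≠ v ∧ y ≠ u ∧ G.Adj v y ∧ ¬ G.Adj u y then 1 else 0) := by
    rw [extI_eq_sum]
    have hd : deltaI G u v = ∑ y : V, if y = u ∧ G.Adj v y then 1 else 0 := by
      have : ∀ y : V, (if y = u ∧ G.Adj v y then (1:ℕ) else 0)
          = if y = u then (if G.Adj v y then 1 else 0) else 0 := by
        intro y; by_cases h : y = u <;> simp [h]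
      simp only [this, Finset.sum_ite_eq', Finset.mem_univ, if_true]
      rw [deltaI, G.adj_comm u v]
    rw [hd, ← Finset.sum_add_distrib, ← Finset.sum_add_distrib]
    refine Finset.sum_congr rfl fun y _ => ?_
    by_cases h1 : y = u
    · subst h1
      simp [G.loopless.irrefl y]
    · by_cases h2 : G.Adj v y
      · have hyv : y ≠ v := fun h => by subst h; exact G.loopless.irrefl y h2
        by_cases h3 : G.Adj u y <;> simp [h1, h2, h3, hyv]
      · simp [h1, h2]
  have hP : (∑ x : V, if x ≠ v ∧ x ≠ u ∧ G.Adj v x ∧ ¬ G.Adj u x then 1 else 0)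
      = ∑ y : V, if y ≠ v ∧ y ≠ u ∧ G.Adj v y ∧ ¬ G.Adj u y then 1 else 0 := rfl
  rw [hb1, hb2, ha1, ha2, hP, hdv] at H
  have hge : esum G = ∑ x : V, ∑ y : V, if G.Adj x y then 1 else 0 := rfl
  have hgm : esum (mergeG G u v) = ∑ x : V, ∑ y : V, if (mergeG G u v).Adj x y then 1 else 0 := rfl
  omega

/-- Two trees have a cross edge. -/
def TreeAdj (G : SimpleGraph V) (S R : BTree V) : Prop :=
  ∃ a ∈ S.leaves, ∃ b ∈ R.leaves, G.Adj a b

lemma TreeAdj.symm' {G : SimpleGraph V} {S R : BTree V} (h : TreeAdj G S R) :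
    TreeAdj G R S := by
  obtain ⟨a, ha, b, hb, hab⟩ := h; exact ⟨b, hb, a, ha, hab.symm⟩

lemma TreeAdj.comm {G : SimpleGraph V} {S R : BTree V} :
    TreeAdj G S R ↔ TreeAdj G R S := ⟨TreeAdj.symm', TreeAdj.symm'⟩

lemma rc_leaves {T T' : BTree V} {u v : V} (h : ReplaceCherry T u v T') :
    ∃ A B : List V, (T.leaves = A ++ u :: v :: B ∨ T.leaves = A ++ v :: u :: B) ∧
      T'.leaves = A ++ u :: B := by
  induction h with
  | base_left u v => exact ⟨[], [], Or.inl rfl, rfl⟩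
  | base_right u v => exact ⟨[], [], Or.inr rfl, rfl⟩
  | @left l l' r u v h ih =>
      obtain ⟨A, B, h1, h2⟩ := ih
      refine ⟨A, B ++ r.leaves, ?_, ?_⟩
      · rcases h1 with h1 | h1
        · exact Or.inl (by simp [BTree.leaves, h1])
        · exact Or.inr (by simp [BTree.leaves, h1])
      · simp [BTree.leaves, h2]
  | @right l r r' u v h ih =>
      obtain ⟨A, B, h1, h2⟩ := ih
      refine ⟨l.leaves ++ A, B, ?_, ?_⟩
      · rcases h1 with h1 | h1
        · exact Or.inl (by simp [BTree.leaves, h1])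
        · exact Or.inr (by simp [BTree.leaves, h1])
      · simp [BTree.leaves, h2]

lemma fstep_leaves {Γ Γ' : Forest V} {u v : V} (h : ForestStep Γ u v Γ') :
    ∃ A B : List V, (Forest.leaves Γ = A ++ u :: v :: B ∨
      Forest.leaves Γ = A ++ v :: u :: B) ∧ Forest.leaves Γ' = A ++ u :: B := by
  induction h with
  | @head t t' ts u v hrc =>
      obtain ⟨A, B, h1, h2⟩ := rc_leaves hrc
      refine ⟨A, B ++ Forest.leaves ts, ?_, ?_⟩
      · rcases h1 with h1 | h1
        · exact Or.inl (by simp [Forest.leaves, h1])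
        · exact Or.inr (by simp [Forest.leaves, h1])
      · simp [Forest.leaves, h2]
  | @tail t ts ts' u v h ih =>
      obtain ⟨A, B, h1, h2⟩ := ih
      have e1 : Forest.leaves (t :: ts) = t.leaves ++ Forest.leaves ts := by
        simp [Forest.leaves]
      have e2 : Forest.leaves (t :: ts') = t.leaves ++ Forest.leaves ts' := by
        simp [Forest.leaves]
      refine ⟨t.leaves ++ A, B, ?_, ?_⟩
      · rcases h1 with h1 | h1
        · exact Or.inl (by rw [e1, h1]; simp)
        · exact Or.inr (by rw [e1, h1]; simp)
      · rw [e2, h2]; simp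

lemma rc_facts {T T' : BTree V} {u v : V} (h : ReplaceCherry T u v T') :
    u ∈ T.leaves ∧ v ∈ T.leaves ∧ u ∈ T'.leaves ∧
      (∀ x ∈ T'.leaves, x ∈ T.leaves) ∧ (∀ x ∈ T.leaves, x ≠ v → x ∈ T'.leaves) := by
  obtain ⟨A, B, h1, h2⟩ := rc_leaves h
  rcases h1 with h1 | h1 <;> rw [h1, h2] <;>
    refine ⟨by simp, by simp, by simp, ?_, ?_⟩ <;> intro x hx <;>
      simp only [List.mem_append, List.mem_cons] at * <;> tauto

lemma fstep_facts {Γ Γ' : Forest V} {u v : V} (h : ForestStep Γ u v Γ') :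
    u ∈ Forest.leaves Γ ∧ v ∈ Forest.leaves Γ ∧ u ∈ Forest.leaves Γ' ∧
      (∀ x ∈ Forest.leaves Γ', x ∈ Forest.leaves Γ) ∧
      (∀ x ∈ Forest.leaves Γ, x ≠ v → x ∈ Forest.leaves Γ') := by
  obtain ⟨A, B, h1, h2⟩ := fstep_leaves h
  rcases h1 with h1 | h1 <;> rw [h1, h2] <;>
    refine ⟨by simp, by simp, by simp, ?_, ?_⟩ <;> intro x hx <;>
      simp only [List.mem_append, List.mem_cons] at * <;> tauto

lemma fstep_nodup {Γ Γ' : Forest V} {u v : V} (h : ForestStep Γ u v Γ')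
    (hnd : (Forest.leaves Γ).Nodup) :
    u ≠ v ∧ (Forest.leaves Γ').Nodup ∧ v ∉ Forest.leaves Γ' := by
  obtain ⟨A, B, h1, h2⟩ := fstep_leaves h
  have hsub : List.Sublist (Forest.leaves Γ') (Forest.leaves Γ) := by
    rw [h2]
    rcases h1 with h1 | h1 <;> rw [h1]
    · exact ((List.sublist_cons_self v B).cons₂ u).append_left A
    · exact (List.sublist_cons_self v (u :: B)).append_left A
  refine ⟨?_, hnd.sublist hsub, ?_⟩
  · rcases h1 with h1 | h1 <;> rw [h1] at hnd <;> rintro rfl <;>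
      simp [List.nodup_append, List.nodup_cons] at hnd
  · rw [h2]; rcases h1 with h1 | h1 <;> rw [h1] at hnd <;> intro hv <;>
      simp [List.nodup_append, List.nodup_cons, List.mem_append, List.mem_cons]
        at hnd hv <;> grind

lemma rc_ne {T T' : BTree V} {u v : V} (h : ReplaceCherry T u v T')
    (hnd : T.leaves.Nodup) : u ≠ v := by
  obtain ⟨A, B, h1, _⟩ := rc_leaves h
  rcases h1 with h1 | h1 <;> rw [h1] at hnd <;> intro hEq <;> subst hEq <;>
    simp [List.nodup_append, List.nodup_cons] at hnd

lemma treeAdj_merge_untouched {G : SimpleGraph V} {u v : V} {S R : BTree V}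
    (hu : u ∉ S.leaves) (hv : v ∉ S.leaves) (hu' : u ∉ R.leaves) (hv' : v ∉ R.leaves) :
    TreeAdj (mergeG G u v) S R ↔ TreeAdj G S R := by
  constructor
  · rintro ⟨a, ha, b, hb, hab⟩
    rw [mergeG_adj] at hab
    obtain ⟨hne, hav, hbv, hc⟩ := hab
    rcases hc with hc | ⟨rfl, _⟩ | ⟨rfl, _⟩
    · exact ⟨a, ha, b, hb, hc⟩
    · exact absurd ha hu
    · exact absurd hb hu'
  · rintro ⟨a, ha, b, hb, hab⟩
    exact ⟨a, ha, b, hb, ⟨hab.ne, fun h => hv (h ▸ ha), fun h => hv' (h ▸ hb),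
      Or.inl hab⟩⟩

lemma treeAdj_merge_cherry {G : SimpleGraph V} {u v : V} {L L' R : BTree V}
    (huv : u ≠ v)
    (hsub : ∀ x ∈ L'.leaves, x ∈ L.leaves) (huL' : u ∈ L'.leaves) (hvL : v ∈ L.leaves)
    (hkeep : ∀ x ∈ L.leaves, x ≠ v → x ∈ L'.leaves)
    (huR : u ∉ R.leaves) (hvR : v ∉ R.leaves) :
    TreeAdj (mergeG G u v) L' R ↔ TreeAdj G L R := by
  constructor
  · rintro ⟨a, ha, b, hb, hab⟩
    rw [mergeG_adj] at hab
    obtain ⟨hne, hav, hbv, hc⟩ := hab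
    rcases hc with hc | ⟨rfl, hc⟩ | ⟨rfl, hc⟩
    · exact ⟨a, hsub a ha, b, hb, hc⟩
    · exact ⟨v, hvL, b, hb, hc⟩
    · exact absurd hb huR
  · rintro ⟨a, ha, b, hb, hab⟩
    by_cases hav : a = v
    · subst hav
      refine ⟨u, huL', b, hb, ?_⟩
      rw [mergeG_adj]
      exact ⟨fun h => huR (h ▸ hb), huv, fun h => hvR (h ▸ hb),
        Or.inr (Or.inl ⟨rfl, hab⟩)⟩
    · refine ⟨a, hkeep a ha hav, b, hb, ?_⟩
      rw [mergeG_adj]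
      exact ⟨hab.ne, hav, fun h => hvR (h ▸ hb), Or.inl hab⟩

noncomputable def dTree (G : SimpleGraph V) : BTree V → ℕ
  | .leaf _ => 0
  | .node l r => dTree G l + dTree G r + (if TreeAdj G l r then 1 else 0)

noncomputable def dForest (G : SimpleGraph V) (Γ : Forest V) : ℕ :=
  (Γ.map (dTree G)).sum

lemma mem_forest_leaves {Γ : Forest V} {x : V} :
    x ∈ Forest.leaves Γ ↔ ∃ t ∈ Γ, x ∈ t.leaves := by
  simp [Forest.leaves]

lemma dtree_untouched {G : SimpleGraph V} {u v : V} {T : BTree V}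
    (hu : u ∉ T.leaves) (hv : v ∉ T.leaves) :
    dTree (mergeG G u v) T = dTree G T := by
  induction T with
  | leaf a => rfl
  | node l r ihl ihr =>
      have hul : u ∉ l.leaves := fun h => hu (by simp [BTree.leaves, h])
      have hur : u ∉ r.leaves := fun h => hu (by simp [BTree.leaves, h])
      have hvl : v ∉ l.leaves := fun h => hv (by simp [BTree.leaves, h])
      have hvr : v ∉ r.leaves := fun h => hv (by simp [BTree.leaves, h])
      rw [dTree, dTree, ihl hul hvl, ihr hur hvr,
        treeAdj_merge_untouched hul hvl hur hvr]

lemma dtree_rc {G : SimpleGraph V} {u v : V} {T T' : BTree V}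
    (h : ReplaceCherry T u v T') (hnd : T.leaves.Nodup) :
    dTree (mergeG G u v) T' + deltaI G u v = dTree G T := by
  induction h with
  | base_left u v =>
      simp [dTree, TreeAdj, BTree.leaves, deltaI]
  | base_right u v =>
      simp [dTree, TreeAdj, BTree.leaves, deltaI, G.adj_comm u v]
  | @left l l' r u v h ih =>
      have hndl : l.leaves.Nodup ∧ r.leaves.Nodup ∧ ∀ x ∈ l.leaves, x ∉ r.leaves := by
        have : (l.leaves ++ r.leaves).Nodup := hnd
        simp [List.nodup_append] at this
        exact ⟨this.1, this.2.1, fun x hx hr => this.2.2 x hx x hr rfl⟩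
      obtain ⟨hu, hv, hu', hsub, hkeep⟩ := rc_facts h
      have huv : u ≠ v := rc_ne h hndl.1
      have hur : u ∉ r.leaves := hndl.2.2 u hu
      have hvr : v ∉ r.leaves := hndl.2.2 v hv
      have hta : TreeAdj (mergeG G u v) l' r ↔ TreeAdj G l r :=
        treeAdj_merge_cherry huv hsub hu' hv hkeep hur hvr
      rw [dTree, dTree, dtree_untouched hur hvr, hta]
      have := ih hndl.1
      omega
  | @right l r r' u v h ih =>
      have hndl : l.leaves.Nodup ∧ r.leaves.Nodup ∧ ∀ x ∈ l.leaves, x ∉ r.leaves := by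
        have : (l.leaves ++ r.leaves).Nodup := hnd
        simp [List.nodup_append] at this
        exact ⟨this.1, this.2.1, fun x hx hr => this.2.2 x hx x hr rfl⟩
      obtain ⟨hu, hv, hu', hsub, hkeep⟩ := rc_facts h
      have huv : u ≠ v := rc_ne h hndl.2.1
      have hul : u ∉ l.leaves := fun hx => hndl.2.2 u hx hu
      have hvl : v ∉ l.leaves := fun hx => hndl.2.2 v hx hv
      have hta : TreeAdj (mergeG G u v) l r' ↔ TreeAdj G l r := by
        rw [TreeAdj.comm, @TreeAdj.comm _ G]
        exact treeAdj_merge_cherry huv hsub hu' hv hkeep hul hvl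
      rw [dTree, dTree, dtree_untouched hul hvl, hta]
      have := ih hndl.2.1
      omega

lemma dforest_untouched {G : SimpleGraph V} {u v : V} {F : Forest V}
    (hu : u ∉ Forest.leaves F) (hv : v ∉ Forest.leaves F) :
    dForest (mergeG G u v) F = dForest G F := by
  induction F with
  | nil => rfl
  | cons t ts ih =>
      have h1 : u ∉ t.leaves := fun h => hu (mem_forest_leaves.2 ⟨t, by simp, h⟩)
      have h2 : v ∉ t.leaves := fun h => hv (mem_forest_leaves.2 ⟨t, by simp, h⟩)
      have h3 : u ∉ Forest.leaves ts := fun h => by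
        obtain ⟨s, hs, hx⟩ := mem_forest_leaves.1 h
        exact hu (mem_forest_leaves.2 ⟨s, by simp [hs], hx⟩)
      have h4 : v ∉ Forest.leaves ts := fun h => by
        obtain ⟨s, hs, hx⟩ := mem_forest_leaves.1 h
        exact hv (mem_forest_leaves.2 ⟨s, by simp [hs], hx⟩)
      simp only [dForest, List.map_cons, List.sum_cons] at *
      rw [dtree_untouched h1 h2, ih h3 h4]

lemma forest_nodup_parts {t : BTree V} {ts : Forest V}
    (hnd : (Forest.leaves (t :: ts)).Nodup) :
    t.leaves.Nodup ∧ (Forest.leaves ts).Nodup ∧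
      ∀ x ∈ t.leaves, x ∉ Forest.leaves ts := by
  have : (t.leaves ++ Forest.leaves ts).Nodup := by
    simpa [Forest.leaves] using hnd
  simp [List.nodup_append] at this
  exact ⟨this.1, this.2.1, fun x hx hr => this.2.2 x hx x hr rfl⟩

lemma dforest_step {G : SimpleGraph V} {Γ Γ' : Forest V} {u v : V}
    (h : ForestStep Γ u v Γ') (hnd : (Forest.leaves Γ).Nodup) :
    dForest (mergeG G u v) Γ' + deltaI G u v = dForest G Γ := by
  induction h with
  | @head t t' ts u v hrc =>
      obtain ⟨hnt, hnts, hdisj⟩ := forest_nodup_parts hnd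
      obtain ⟨hu, hv, _, _, _⟩ := rc_facts hrc
      simp only [dForest, List.map_cons, List.sum_cons]
      have h1 := dtree_rc (G := G) hrc hnt
      have h2 : dForest (mergeG G u v) ts = dForest G ts :=
        dforest_untouched (hdisj u hu) (hdisj v hv)
      simp only [dForest] at h2
      omega
  | @tail t ts ts' u v h ih =>
      obtain ⟨hnt, hnts, hdisj⟩ := forest_nodup_parts hnd
      obtain ⟨hu, hv, _, _, _⟩ := fstep_facts h
      have h1 : u ∉ t.leaves := fun hx => hdisj u hx hu
      have h2 : v ∉ t.leaves := fun hx => hdisj v hx hv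
      simp only [dForest, List.map_cons, List.sum_cons]
      rw [dtree_untouched h1 h2]
      have := ih hnts
      simp only [dForest] at this
      omega

noncomputable def tpc (G : SimpleGraph V) : Forest V → ℕ
  | [] => 0
  | t :: ts => (ts.map (fun t' => if TreeAdj G t t' then 1 else 0)).sum + tpc G ts

lemma row_untouched {G : SimpleGraph V} {u v : V} {t : BTree V} {ts : Forest V}
    (hut : u ∉ t.leaves) (hvt : v ∉ t.leaves)
    (hu : u ∉ Forest.leaves ts) (hv : v ∉ Forest.leaves ts) :
    (ts.map (fun t' => if TreeAdj (mergeG G u v) t t' then 1 else 0)).sum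
      = (ts.map (fun t' => if TreeAdj G t t' then 1 else 0)).sum := by
  refine congrArg List.sum (List.map_congr_left fun s hs => ?_)
  have h1 : u ∉ s.leaves := fun h => hu (mem_forest_leaves.2 ⟨s, hs, h⟩)
  have h2 : v ∉ s.leaves := fun h => hv (mem_forest_leaves.2 ⟨s, hs, h⟩)
  rw [treeAdj_merge_untouched hut hvt h1 h2]

lemma tpc_untouched {G : SimpleGraph V} {u v : V} {F : Forest V}
    (hu : u ∉ Forest.leaves F) (hv : v ∉ Forest.leaves F) :
    tpc (mergeG G u v) F = tpc G F := by
  induction F with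
  | nil => rfl
  | cons t ts ih =>
      have h1 : u ∉ t.leaves := fun h => hu (mem_forest_leaves.2 ⟨t, by simp, h⟩)
      have h2 : v ∉ t.leaves := fun h => hv (mem_forest_leaves.2 ⟨t, by simp, h⟩)
      have h3 : u ∉ Forest.leaves ts := fun h => by
        obtain ⟨s, hs, hx⟩ := mem_forest_leaves.1 h
        exact hu (mem_forest_leaves.2 ⟨s, by simp [hs], hx⟩)
      have h4 : v ∉ Forest.leaves ts := fun h => by
        obtain ⟨s, hs, hx⟩ := mem_forest_leaves.1 h
        exact hv (mem_forest_leaves.2 ⟨s, by simp [hs], hx⟩)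
      rw [tpc, tpc, ih h3 h4, row_untouched h1 h2 h3 h4]

lemma row_step {G : SimpleGraph V} {u v : V} {ts ts' : Forest V}
    (h : ForestStep ts u v ts') (hnd : (Forest.leaves ts).Nodup)
    {t : BTree V} (hut : u ∉ t.leaves) (hvt : v ∉ t.leaves) :
    (ts'.map (fun s => if TreeAdj (mergeG G u v) t s then 1 else 0)).sum
      = (ts.map (fun s => if TreeAdj G t s then 1 else 0)).sum := by
  induction h with
  | @head t₀ t₀' rest u v hrc =>
      obtain ⟨hnt, hnts, hdisj⟩ := forest_nodup_parts hnd
      obtain ⟨hu, hv, hu', hsub, hkeep⟩ := rc_facts hrc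
      have huv : u ≠ v := rc_ne hrc hnt
      simp only [List.map_cons, List.sum_cons]
      have hhead : TreeAdj (mergeG G u v) t t₀' ↔ TreeAdj G t t₀ := by
        rw [TreeAdj.comm, @TreeAdj.comm _ G]
        exact treeAdj_merge_cherry huv hsub hu' hv hkeep hut hvt
      rw [hhead, row_untouched hut hvt (hdisj u hu) (hdisj v hv)]
  | @tail t₁ rest rest' u v h ih =>
      obtain ⟨hnt, hnts, hdisj⟩ := forest_nodup_parts hnd
      obtain ⟨hu, hv, _, _, _⟩ := fstep_facts h
      have h1 : u ∉ t₁.leaves := fun hx => hdisj u hx hu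
      have h2 : v ∉ t₁.leaves := fun hx => hdisj v hx hv
      simp only [List.map_cons, List.sum_cons]
      rw [ih hnts hut hvt, treeAdj_merge_untouched hut hvt h1 h2]

lemma tpc_step {G : SimpleGraph V} {Γ Γ' : Forest V} {u v : V}
    (h : ForestStep Γ u v Γ') (hnd : (Forest.leaves Γ).Nodup) :
    tpc (mergeG G u v) Γ' = tpc G Γ := by
  induction h with
  | @head t t' ts u v hrc =>
      obtain ⟨hnt, hnts, hdisj⟩ := forest_nodup_parts hnd
      obtain ⟨hu, hv, hu', hsub, hkeep⟩ := rc_facts hrc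
      have huv : u ≠ v := rc_ne hrc hnt
      rw [tpc, tpc, tpc_untouched (hdisj u hu) (hdisj v hv)]
      congr 1
      refine congrArg List.sum (List.map_congr_left fun s hs => ?_)
      have h1 : u ∉ s.leaves := fun hx => hdisj u hu (mem_forest_leaves.2 ⟨s, hs, hx⟩)
      have h2 : v ∉ s.leaves := fun hx => hdisj v hv (mem_forest_leaves.2 ⟨s, hs, hx⟩)
      rw [treeAdj_merge_cherry huv hsub hu' hv hkeep h1 h2]
  | @tail t ts ts' u v h ih =>
      obtain ⟨hnt, hnts, hdisj⟩ := forest_nodup_parts hnd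
      obtain ⟨hu, hv, _, _, _⟩ := fstep_facts h
      have h1 : u ∉ t.leaves := fun hx => hdisj u hx hu
      have h2 : v ∉ t.leaves := fun hx => hdisj v hx hv
      rw [tpc, tpc, ih hnts, row_step h hnts h1 h2]

/-- All edges of `G` have both endpoints among the leaves of `Γ`. -/
def Supp (G : SimpleGraph V) (Γ : Forest V) : Prop :=
  ∀ ⦃x y : V⦄, G.Adj x y → x ∈ Forest.leaves Γ ∧ y ∈ Forest.leaves Γ

lemma supp_step {G : SimpleGraph V} {Γ Γ' : Forest V} {u v : V}
    (h : ForestStep Γ u v Γ') (hs : Supp G Γ) : Supp (mergeG G u v) Γ' := by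
  obtain ⟨hu, hv, hu', hsub, hkeep⟩ := fstep_facts h
  intro x y hxy
  rw [mergeG_adj] at hxy
  obtain ⟨hne, hxv, hyv, hc⟩ := hxy
  rcases hc with hc | ⟨rfl, hc⟩ | ⟨rfl, hc⟩
  · exact ⟨hkeep x (hs hc).1 hxv, hkeep y (hs hc).2 hyv⟩
  · exact ⟨hu', hkeep y (hs hc).2 hyv⟩
  · exact ⟨hkeep x (hs hc).2 hxv, hu'⟩

lemma dforest_seed {G : SimpleGraph V} {Γ₀ : Forest V} (h : IsSeed Γ₀) :
    dForest G Γ₀ = 0 := by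
  induction Γ₀ with
  | nil => rfl
  | cons t ts ih =>
      obtain ⟨a, rfl⟩ := h t (by simp)
      have : dForest G ts = 0 := ih fun s hs => h s (by simp [hs])
      simp [dForest, dTree] at this ⊢
      exact this

/-- Delete a vertex (make it isolated). -/
def delV (G : SimpleGraph V) (a : V) : SimpleGraph V where
  Adj x y := G.Adj x y ∧ x ≠ a ∧ y ≠ a
  symm := ⟨by rintro x y ⟨h1, h2, h3⟩; exact ⟨h1.symm, h3, h2⟩⟩
  loopless := ⟨fun x h => G.loopless.irrefl x h.1⟩

lemma treeadj_delV {G : SimpleGraph V} {a : V} {S R : BTree V}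
    (hS : a ∉ S.leaves) (hR : a ∉ R.leaves) :
    TreeAdj (delV G a) S R ↔ TreeAdj G S R := by
  constructor
  · rintro ⟨x, hx, y, hy, hxy, _, _⟩; exact ⟨x, hx, y, hy, hxy⟩
  · rintro ⟨x, hx, y, hy, hxy⟩
    exact ⟨x, hx, y, hy, hxy, fun h => hS (h ▸ hx), fun h => hR (h ▸ hy)⟩

lemma tpc_congr {G₁ G₂ : SimpleGraph V} {F : Forest V}
    (h : ∀ S ∈ F, ∀ R ∈ F, (TreeAdj G₁ S R ↔ TreeAdj G₂ S R)) :
    tpc G₁ F = tpc G₂ F := by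
  induction F with
  | nil => rfl
  | cons t ts ih =>
      rw [tpc, tpc, ih fun S hS R hR => h S (by simp [hS]) R (by simp [hR])]
      congr 1
      refine congrArg List.sum (List.map_congr_left fun s hs => ?_)
      rw [h t (by simp) s (by simp [hs])]

lemma esum_delV [Fintype V] (G : SimpleGraph V) (a : V) :
    esum G = esum (delV G a) + 2 * (∑ y : V, if G.Adj a y then 1 else 0) := by
  have key : ∀ x y : V, (if G.Adj x y then 1 else 0)
      = (if (delV G a).Adj x y then 1 else 0) + ((if x = a ∧ G.Adj a y then 1 else 0)
        + (if y = a ∧ x ≠ a ∧ G.Adj x a then 1 else 0)) := by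
    have hA : ∀ x y : V, (delV G a).Adj x y ↔ (G.Adj x y ∧ x ≠ a ∧ y ≠ a) :=
      fun _ _ => Iff.rfl
    intro x y
    simp only [hA]
    by_cases h1 : x = a
    · subst h1
      by_cases h2 : y = x
      · subst h2; simp [G.loopless]
      · by_cases h3 : G.Adj x y <;> simp [h2, h3, Ne.symm h2]
    · by_cases h2 : y = a
      · subst h2
        by_cases h3 : G.Adj x y <;> simp [h1, h3]
      · by_cases h3 : G.Adj x y <;> simp [h1, h2, h3]
  have H : esum G = ∑ x : V, ∑ y : V, ((if (delV G a).Adj x y then 1 else 0)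
      + ((if x = a ∧ G.Adj a y then 1 else 0)
        + (if y = a ∧ x ≠ a ∧ G.Adj x a then 1 else 0))) := by
    rw [esum]
    exact Finset.sum_congr rfl fun x _ => Finset.sum_congr rfl fun y _ => key x y
  simp only [Finset.sum_add_distrib] at H
  have h1 : (∑ x : V, ∑ y : V, if x = a ∧ G.Adj a y then 1 else 0)
      = ∑ y : V, if G.Adj a y then 1 else 0 := by
    rw [Finset.sum_comm]
    refine Finset.sum_congr rfl fun y _ => ?_
    by_cases h : G.Adj a y <;> simp [h]
  have h2 : (∑ x : V, ∑ y : V, if y = a ∧ x ≠ a ∧ G.Adj x a then 1 else 0)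
      = ∑ y : V, if G.Adj a y then 1 else 0 := by
    refine Finset.sum_congr rfl fun x _ => ?_
    by_cases h : G.Adj x a
    · have hxa : x ≠ a := G.ne_of_adj h
      have h' : G.Adj a x := h.symm
      simp [h, hxa, h']
    · have h' : ¬ G.Adj a x := fun hh => h (hh.symm)
      simp [h, h']
  rw [h1, h2] at H
  have hgm : esum (delV G a) = ∑ x : V, ∑ y : V, if (delV G a).Adj x y then 1 else 0 := rfl
  omega

lemma seed_row {G : SimpleGraph V} {a : V} {ts : Forest V} (hseed : IsSeed ts) :
    (ts.map (fun s => if TreeAdj G (BTree.leaf a) s then 1 else 0)).sum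
      = ((Forest.leaves ts).map (fun b => if G.Adj a b then 1 else 0)).sum := by
  induction ts with
  | nil => rfl
  | cons t rest ih =>
      obtain ⟨b, rfl⟩ := hseed t (by simp)
      have e : Forest.leaves (BTree.leaf b :: rest) = b :: Forest.leaves rest := by
        simp [Forest.leaves, BTree.leaves]
      rw [e]
      simp only [List.map_cons, List.sum_cons]
      rw [ih fun s hs => hseed s (by simp [hs])]
      congr 1
      have : TreeAdj G (BTree.leaf a) (BTree.leaf b) ↔ G.Adj a b := by
        simp [TreeAdj, BTree.leaves]
      rw [this]

lemma list_sum_indicator [Fintype V] {l : List V} (hl : l.Nodup) (p : V → Prop)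
    (hp : ∀ y, p y → y ∈ l) :
    (l.map (fun y => if p y then 1 else 0)).sum = ∑ y : V, if p y then 1 else 0 := by
  rw [← List.sum_toFinset _ hl]
  rw [← Finset.sum_subset (Finset.subset_univ l.toFinset)]
  intro y _ hy
  have : ¬ p y := fun hpy => hy (List.mem_toFinset.2 (hp y hpy))
  simp [this]

lemma esum_seed [Fintype V] :
    ∀ (Γ₀ : Forest V) (G : SimpleGraph V), IsSeed Γ₀ → (Forest.leaves Γ₀).Nodup →
      Supp G Γ₀ → esum G = 2 * tpc G Γ₀ := by
  intro Γ₀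
  induction Γ₀ with
  | nil =>
      intro G _ _ hsup
      have : ∀ x y : V, ¬ G.Adj x y := by
        intro x y h
        have := (hsup h).1
        simp [Forest.leaves] at this
      rw [esum]
      simp [this, tpc]
  | cons t ts ih =>
      intro G hseed hnd hsup
      obtain ⟨a, rfl⟩ := hseed t (by simp)
      have e : Forest.leaves (BTree.leaf a :: ts) = a :: Forest.leaves ts := by
        simp [Forest.leaves, BTree.leaves]
      rw [e] at hnd
      have hsup' : ∀ ⦃x y : V⦄, G.Adj x y →
          x ∈ a :: Forest.leaves ts ∧ y ∈ a :: Forest.leaves ts := by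
        intro x y hxy
        have h := hsup hxy
        rwa [e] at h
      have hand : a ∉ Forest.leaves ts := (List.nodup_cons.1 hnd).1
      have hndt : (Forest.leaves ts).Nodup := (List.nodup_cons.1 hnd).2
      have hseedt : IsSeed ts := fun s hs => hseed s (by simp [hs])
      have hsupt : Supp (delV G a) ts := by
        rintro x y ⟨hxy, hx, hy⟩
        obtain ⟨h1, h2⟩ := hsup' hxy
        rcases List.mem_cons.1 h1 with rfl | h1
        · exact absurd rfl hx
        · rcases List.mem_cons.1 h2 with rfl | h2
          · exact absurd rfl hy
          · exact ⟨h1, h2⟩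
      have ihts := ih (delV G a) hseedt hndt hsupt
      have hda : (ts.map (fun s => if TreeAdj G (BTree.leaf a) s then 1 else 0)).sum
          = ∑ y : V, if G.Adj a y then 1 else 0 := by
        rw [seed_row hseedt]
        refine list_sum_indicator hndt _ fun y hy => ?_
        have h2 := (hsup' hy).2
        rcases List.mem_cons.1 h2 with rfl | h2
        · exact absurd hy (G.loopless.irrefl y)
        · exact h2
      have htpc : tpc G ts = tpc (delV G a) ts := by
        refine tpc_congr fun S hS R hR => ?_
        have hA : a ∉ S.leaves := fun hx => hand (mem_forest_leaves.2 ⟨S, hS, hx⟩)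
        have hB : a ∉ R.leaves := fun hx => hand (mem_forest_leaves.2 ⟨R, hR, hx⟩)
        exact (treeadj_delV hA hB).symm
      rw [tpc, hda, htpc, esum_delV G a, ihts]
      ring

lemma graphAfter_cons (G : SimpleGraph V) (a : V × V) (rest : List (V × V)) :
    graphAfter G (a :: rest) = graphAfter (mergeG G a.1 a.2) rest := rfl

lemma unfold_main [Fintype V] {Γ Γ₀ : Forest V} {s : List (V × V)}
    (h : FUnfold Γ s Γ₀) :
    ∀ (G : SimpleGraph V), (Forest.leaves Γ).Nodup → Supp G Γ →
      deltaNum G s + dForest (graphAfter G s) Γ₀ = dForest G Γ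
      ∧ esum (graphAfter G s) + 2 * extNum G s + 2 * deltaNum G s = esum G
      ∧ tpc (graphAfter G s) Γ₀ = tpc G Γ
      ∧ (Forest.leaves Γ₀).Nodup ∧ Supp (graphAfter G s) Γ₀ := by
  induction h with
  | nil Γ =>
      intro G hnd hsup
      exact ⟨by simp [deltaNum, graphAfter], by simp [extNum, deltaNum, graphAfter],
        rfl, hnd, hsup⟩
  | @cons Γ Γ' Γ₀ u v steps hstep hunf ih =>
      intro G hnd hsup
      obtain ⟨huv, hnd', hvn⟩ := fstep_nodup hstep hnd
      have hsup' := supp_step (G := G) hstep hsup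
      obtain ⟨ih1, ih2, ih3, ih4, ih5⟩ := ih (mergeG G u v) hnd' hsup'
      have hd := dforest_step (G := G) hstep hnd
      have he := esum_merge G huv
      have ht := tpc_step (G := G) hstep hnd
      rw [graphAfter_cons]
      refine ⟨?_, ?_, ?_, ih4, ih5⟩
      · simp only [deltaNum]; omega
      · simp only [extNum, deltaNum]; omega
      · rw [ih3, ht]

lemma key_invariants [Fintype V] {G : SimpleGraph V} {Γ Γ₀ : Forest V}
    {s : List (V × V)} (h : FUnfold Γ s Γ₀) (hseed : IsSeed Γ₀)
    (hnd : (Forest.leaves Γ).Nodup) (hsup : Supp G Γ) :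
    deltaNum G s = dForest G Γ ∧
      esum G = 2 * tpc G Γ + 2 * extNum G s + 2 * deltaNum G s := by
  obtain ⟨h1, h2, h3, h4, h5⟩ := unfold_main h G hnd hsup
  have hz : dForest (graphAfter G s) Γ₀ = 0 := dforest_seed hseed
  have he : esum (graphAfter G s) = 2 * tpc (graphAfter G s) Γ₀ :=
    esum_seed Γ₀ (graphAfter G s) hseed h4 h5
  omega

lemma likelihood_eq [Fintype V] (pc p : ℝ) :
    ∀ (s : List (V × V)) (G : SimpleGraph V),
      likelihood pc p G s
        = pc ^ deltaNum G s * p ^ extNum G s * ((1 - p) / 2) ^ lossNum G s := by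
  intro s
  induction s with
  | nil => intro G; simp [likelihood, deltaNum, extNum, lossNum]
  | cons a rest ih =>
      intro G
      rw [likelihood, deltaNum, extNum, lossNum, ih, pow_add, pow_add, pow_add]
      ring

/-- for two compatible duplicate sequences,
`L(θ₁)/L(θ₂) = ((1-p)/2)^{ℓ(θ₁) - ℓ(θ₂)}`; in particular a compatible sequence has
larger likelihood iff it has smaller loss number (independently of `p_c`, `p`). -/
theorem stmt10 [Fintype V] (G : SimpleGraph V) (Γ : Forest V)
    (hnd : (Forest.leaves Γ).Nodup) (hall : ∀ x : V, x ∈ Forest.leaves Γ)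
    (s₁ s₂ : List (V × V)) (Γ₁ Γ₂ : Forest V)
    (h₁ : FUnfold Γ s₁ Γ₁) (hseed₁ : IsSeed Γ₁)
    (h₂ : FUnfold Γ s₂ Γ₂) (hseed₂ : IsSeed Γ₂)
    (pc p : ℝ) (hpc0 : 0 < pc) (hpc1 : pc < 1) (hp0 : 0 < p) (hp1 : p < 1) :
    likelihood pc p G s₁ / likelihood pc p G s₂ =
        ((1 - p) / 2) ^ ((lossNum G s₁ : ℤ) - (lossNum G s₂ : ℤ)) ∧
      (likelihood pc p G s₂ ≤ likelihood pc p G s₁ ↔ lossNum G s₁ ≤ lossNum G s₂) := by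
  have hsup : Supp G Γ := fun x y _ => ⟨hall _, hall _⟩
  obtain ⟨k1, k2⟩ := key_invariants h₁ hseed₁ hnd hsup
  obtain ⟨k1', k2'⟩ := key_invariants h₂ hseed₂ hnd hsup
  have hδ : deltaNum G s₁ = deltaNum G s₂ := by rw [k1, k1']
  have hε : extNum G s₁ = extNum G s₂ := by omega
  have hq0 : (0:ℝ) < (1 - p) / 2 := by linarith
  have hq1 : (1 - p) / 2 < 1 := by linarith
  have hC : (0:ℝ) < pc ^ deltaNum G s₂ * p ^ extNum G s₂ := by positivity
  have hL1 : likelihood pc p G s₁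
      = pc ^ deltaNum G s₂ * p ^ extNum G s₂ * ((1 - p) / 2) ^ lossNum G s₁ := by
    rw [likelihood_eq, hδ, hε]
  have hL2 : likelihood pc p G s₂
      = pc ^ deltaNum G s₂ * p ^ extNum G s₂ * ((1 - p) / 2) ^ lossNum G s₂ :=
    likelihood_eq pc p s₂ G
  constructor
  · rw [hL1, hL2, mul_div_mul_left _ _ (ne_of_gt hC),
      zpow_sub₀ (ne_of_gt hq0), zpow_natCast, zpow_natCast]
  · rw [hL1, hL2, mul_le_mul_iff_right₀ hC, ← zpow_natCast ((1 - p) / 2) (lossNum G s₂),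
      ← zpow_natCast ((1 - p) / 2) (lossNum G s₁),
      zpow_le_zpow_iff_right_of_lt_one₀ hq0 hq1]
    exact Nat.cast_le
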